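/- Let P₁, P₂ be distributions on a finite alphabet X, and suppose a random sequence X^n is drawn i.i.d. from P₁ and an independent sequence Y^n i.i.d. from P₂. Fix a continuous scoring function f : P(X)² → ℝ≥0 and λ ∈ ℝ≥0. Then the probability that f(T̂_{X^n}, T̂_{Y^n}) ≤ λ, where T̂ denotes the empirical distribution (type), is at most (n+1)^{2|X|} · exp(−n·Ω(P₁,P₂,λ)), where Ω(P₁,P₂,λ) := min over pairs (Q₁,Q₂) of distributions with f(Q₁,Q₂) ≤ λ of D(Q₁‖P₁)+D(Q₂‖P₂). -/

import Mathlib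

open scoped BigOperators

noncomputable section

variable {X : Type*}

/-- `p` is a probability mass function on the finite alphabet `X`. -/
def IsProbVec [Fintype X] (p : X → ℝ) : Prop := (∀ x, 0 ≤ p x) ∧ ∑ x, p x = 1

/-- One term of the KL divergence, with the conventions `0 · log (0/q) = 0` and
`p · log (p/0) = +∞` for `p > 0`. -/
def klTerm (p q : ℝ) : EReal :=
  if p = 0 then 0 else if q = 0 then ⊤ else ((p * Real.log (p / q) : ℝ) : EReal)

/-- Kullback–Leibler divergence `D(P‖Q)` on a finite alphabet, valued in `EReal`. -/
def KL [Fintype X] (P Q : X → ℝ) : EReal := ∑ x, klTerm (P x) (Q x)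

/-- Generalized Jensen–Shannon divergence. -/
def GJS [Fintype X] (P Q : X → ℝ) : EReal :=
  KL P (fun x => (P x + Q x) / 2) + KL Q (fun x => (P x + Q x) / 2)

variable [Fintype X]

/-- The exponent function `η(P₁,P₂)`: infimum of `D(Q₁‖P₁)+D(Q₂‖P₂)+D(Q₃‖P₂)` over triples of
distributions with `f(Q₁,Q₂) ≤ f(Q₃,Q₂)`. -/
def eta (f : (X → ℝ) → (X → ℝ) → ℝ) (P₁ P₂ : X → ℝ) : EReal :=
  ⨅ t : {t : (X → ℝ) × (X → ℝ) × (X → ℝ) //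
      IsProbVec t.1 ∧ IsProbVec t.2.1 ∧ IsProbVec t.2.2 ∧ f t.1 t.2.1 ≤ f t.2.2 t.2.1},
    KL t.1.1 P₁ + KL t.1.2.1 P₂ + KL t.1.2.2 P₂

/-- The exponent function `Ω(P₁,P₂,λ)`: infimum of `D(Q₁‖P₁)+D(Q₂‖P₂)` over pairs of
distributions with `f(Q₁,Q₂) ≤ λ`. -/
def Omega (f : (X → ℝ) → (X → ℝ) → ℝ) (P₁ P₂ : X → ℝ) (lam : ℝ) : EReal :=
  ⨅ t : {t : (X → ℝ) × (X → ℝ) // IsProbVec t.1 ∧ IsProbVec t.2 ∧ f t.1 t.2 ≤ lam},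
    KL t.1.1 P₁ + KL t.1.2 P₂

/-- The exponent function `Υ(P,λ)`: infimum of `D(Q₁‖P)+D(Q₂‖P)` over pairs of distributions
with `f(Q₁,Q₂) ≥ λ` (the infimum over the empty set being `+∞`). -/
def Upsilon (f : (X → ℝ) → (X → ℝ) → ℝ) (P : X → ℝ) (lam : ℝ) : EReal :=
  ⨅ t : {t : (X → ℝ) × (X → ℝ) // IsProbVec t.1 ∧ IsProbVec t.2 ∧ lam ≤ f t.1 t.2},
    KL t.1.1 P + KL t.1.2 P

/-- The exponent function `γ(P₁,P₂)`: infimum of `D(Q₁‖P₁)+D(Q₂‖P₁)+D(Q₃‖P₂)` over triples of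
distributions with `f(Q₁,Q₃) ≤ f(Q₁,Q₂)`. -/
def gammaExp (f : (X → ℝ) → (X → ℝ) → ℝ) (P₁ P₂ : X → ℝ) : EReal :=
  ⨅ t : {t : (X → ℝ) × (X → ℝ) × (X → ℝ) //
      IsProbVec t.1 ∧ IsProbVec t.2.1 ∧ IsProbVec t.2.2 ∧ f t.1 t.2.2 ≤ f t.1 t.2.1},
    KL t.1.1 P₁ + KL t.1.2.1 P₁ + KL t.1.2.2 P₂

/-- `min_Q D(Q‖P₁)+D(Q‖P₂)`, i.e. `Ω(P₁,P₂,0)` for a scoring function vanishing exactly on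
the diagonal. -/
def OmegaZero (P₁ P₂ : X → ℝ) : EReal :=
  ⨅ Q : {q : X → ℝ // IsProbVec q}, KL Q.1 P₁ + KL Q.1 P₂

/-- Empirical distribution (type) of a length-`n` sequence. -/
def empDist [DecidableEq X] (n : ℕ) (x : Fin n → X) : X → ℝ :=
  fun a => ((Finset.univ.filter (fun i => x i = a)).card : ℝ) / n

lemma key_ineq (c : ℝ) (hc : 0 < c) {a b w : EReal} (ha : a ≠ ⊥) (hb : b ≠ ⊥)
    (h : w ≤ a + b) :
    (-(c : EReal)) * a + (-(c : EReal)) * b ≤ (-(c : EReal)) * w := by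
  have hcneg : (-(c:ℝ) : EReal) < 0 := by exact_mod_cast neg_neg_of_pos hc
  have hcoe : (-(c : EReal)) = ((-c : ℝ) : EReal) := by norm_cast
  rw [hcoe]
  induction w with
  | bot => rw [EReal.coe_mul_bot_of_neg (by linarith)]; exact le_top
  | top =>
      have : a = ⊤ ∨ b = ⊤ := by
        by_contra hcon
        push_neg at hcon
        lift a to ℝ using ⟨hcon.1, ha⟩
        lift b to ℝ using ⟨hcon.2, hb⟩
        rw [← EReal.coe_add] at h
        exact EReal.top_ne_coe (a + b) (top_le_iff.mp h).symm
      rw [EReal.coe_mul_top_of_neg (by linarith)]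
      rcases this with h1 | h1
      · rw [h1, EReal.coe_mul_top_of_neg (by linarith)]
        simp
      · rw [h1, EReal.coe_mul_top_of_neg (by linarith)]
        simp
  | coe w =>
      induction a with
      | bot => exact absurd rfl ha
      | top =>
          rw [EReal.coe_mul_top_of_neg (by linarith)]
          simp
      | coe a =>
          induction b with
          | bot => exact absurd rfl hb
          | top =>
              rw [EReal.coe_mul_top_of_neg (by linarith)]
              simp
          | coe b =>
              rw [← EReal.coe_mul, ← EReal.coe_mul, ← EReal.coe_mul, ← EReal.coe_add]
              rw [← EReal.coe_add] at h
              have h' : w ≤ a + b := by exact_mod_cast h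
              have : -c * a + -c * b = -c * (a+b) := by ring
              rw [this]
              exact_mod_cast mul_le_mul_of_nonpos_left h' (by linarith)

lemma klTerm_ne_bot (p q : ℝ) : klTerm p q ≠ ⊥ := by
  unfold klTerm
  split_ifs
  · simp
  · simp
  · exact EReal.coe_ne_bot _

lemma KL_ne_bot (P Q : X → ℝ) : KL P Q ≠ ⊥ := by
  unfold KL
  classical
  induction (Finset.univ : Finset X) using Finset.cons_induction with
  | empty => simp
  | cons a s ha ih =>
      rw [Finset.sum_cons]
      intro hcon
      rcases EReal.add_eq_bot_iff.mp hcon with h | h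
      · exact klTerm_ne_bot _ _ h
      · exact ih h

lemma empDist_nonneg [DecidableEq X] (n : ℕ) (x : Fin n → X) (a : X) : 0 ≤ empDist n x a := by
  unfold empDist; positivity

lemma empDist_isProbVec [DecidableEq X] (n : ℕ) (hn : 0 < n) (x : Fin n → X) : IsProbVec (empDist n x) := by
  refine ⟨empDist_nonneg n x, ?_⟩
  unfold empDist
  rw [← Finset.sum_div]
  rw [div_eq_one_iff_eq (by positivity)]
  rw [← Nat.cast_sum]
  norm_cast
  have := (Finset.card_eq_sum_card_fiberwise (s := (Finset.univ : Finset (Fin n)))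
    (t := (Finset.univ : Finset X)) (f := x) (fun i _ => Finset.mem_univ (x i)))
  simp only [Finset.card_univ, Fintype.card_fin] at this
  exact this.symm

lemma card_types_le [DecidableEq X] (n : ℕ) (hn : 0 < n) :
    ((Finset.univ.image (empDist (X := X) n)).card) ≤ (n+1) ^ Fintype.card X := by
  have : ((Finset.univ.image (empDist (X := X) n)).card) ≤ (Finset.univ : Finset (X → Fin (n+1))).card := by
    apply Finset.card_le_card_of_injOn
      (fun (Q : X → ℝ) (a : X) => (⟨min (⌊Q a * n⌋₊) n, by omega⟩ : Fin (n+1)))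
    · intro _ _; exact Finset.mem_univ _
    · intro Q₁ h₁ Q₂ h₂ heq
      simp only [Finset.mem_coe, Finset.mem_image] at h₁ h₂
      obtain ⟨x₁, -, rfl⟩ := h₁
      obtain ⟨x₂, -, rfl⟩ := h₂
      have key : ∀ (x : Fin n → X) (a : X),
          (⌊empDist n x a * n⌋₊ : ℝ) = empDist n x a * n ∧ ⌊empDist n x a * n⌋₊ ≤ n := by
        intro x a
        have : empDist n x a * n = ((Finset.univ.filter (fun i => x i = a)).card : ℝ) := by
          unfold empDist
          field_simp
        rw [this]
        rw [Nat.floor_natCast]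
        exact ⟨rfl, by simpa using Finset.card_filter_le Finset.univ (fun i => x i = a)⟩
      funext a
      have e := congrFun heq a
      simp only at e
      have h1 := key x₁ a
      have h2 := key x₂ a
      rw [Fin.mk.injEq, min_eq_left h1.2, min_eq_left h2.2] at e
      have : (⌊empDist n x₁ a * n⌋₊ : ℝ) = ⌊empDist n x₂ a * n⌋₊ := by exact_mod_cast e
      rw [h1.1, h2.1] at this
      have hn' : (0:ℝ) < n := by positivity
      exact mul_right_cancel₀ (by positivity) this
  simpa using this

lemma ereal_coe_sum {α : Type*} (s : Finset α) (f : α → ℝ) :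
    ((∑ a ∈ s, f a : ℝ) : EReal) = ∑ a ∈ s, ((f a : ℝ) : EReal) := by
  classical
  induction s using Finset.cons_induction with
  | empty => simp
  | cons a t ha ih => rw [Finset.sum_cons, Finset.sum_cons, EReal.coe_add, ih]

lemma fiber_bound [DecidableEq X] (P : X → ℝ) (hP : IsProbVec P) (n : ℕ) (hn : 0 < n) (Q : X → ℝ) :
    ∑ x ∈ Finset.univ.filter (fun x : Fin n → X => empDist n x = Q),
      ENNReal.ofReal (∏ i, P (x i)) ≤ EReal.exp (-(n : EReal) * KL Q P) := by
  set F := Finset.univ.filter (fun x : Fin n → X => empDist n x = Q) with hF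
  rcases Finset.eq_empty_or_nonempty F with hFe | hFne
  · rw [hFe]; simp
  obtain ⟨x₀, hx₀⟩ := hFne
  rw [hF, Finset.mem_filter] at hx₀
  have hQemp : empDist n x₀ = Q := hx₀.2
  have hQnn : ∀ a, 0 ≤ Q a := hQemp ▸ empDist_nonneg n x₀
  have hnR : (0:ℝ) < n := by positivity
  by_cases hbad : ∃ a, Q a ≠ 0 ∧ P a = 0
  · -- every sequence in the fiber has probability zero
    obtain ⟨a, hQa, hPa⟩ := hbad
    have : ∀ x ∈ F, ENNReal.ofReal (∏ i, P (x i)) = 0 := by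
      intro x hx
      rw [hF, Finset.mem_filter] at hx
      have hcard : ((Finset.univ.filter (fun i => x i = a)).card : ℝ) / n = Q a :=
        congrFun hx.2 a
      have hcard' : (Finset.univ.filter (fun i => x i = a)).Nonempty := by
        rw [Finset.nonempty_iff_ne_empty]
        intro hcon
        rw [hcon] at hcard
        simp at hcard
        exact hQa hcard.symm
      obtain ⟨i, hi⟩ := hcard'
      rw [Finset.mem_filter] at hi
      have : ∏ j, P (x j) = 0 :=
        Finset.prod_eq_zero (Finset.mem_univ i) (by rw [hi.2, hPa])
      rw [this]; simp
    rw [Finset.sum_congr rfl this]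
    simp
  · push_neg at hbad
    -- KL Q P is the real number r
    set r : ℝ := ∑ a, (if Q a = 0 then 0 else Q a * Real.log (Q a / P a)) with hr
    have hKL : KL Q P = (r : EReal) := by
      unfold KL
      rw [hr, ereal_coe_sum]
      apply Finset.sum_congr rfl
      intro a _
      unfold klTerm
      by_cases h0 : Q a = 0
      · simp [h0]
      · rw [if_neg h0, if_neg (hbad a h0), if_neg h0]
    have hRHS : EReal.exp (-(n : EReal) * KL Q P) = ENNReal.ofReal (Real.exp (-(n * r))) := by
      rw [hKL]
      have h1 : (-(n : EReal)) = (((-(n:ℝ)) : ℝ) : EReal) := by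
        rw [EReal.coe_neg, EReal.coe_coe_eq_natCast]
      rw [h1, ← EReal.coe_mul, EReal.exp_coe]
      congr 1
      ring
    rw [hRHS]
    -- pointwise identity on the fiber
    have hpt : ∀ x ∈ F, ∏ i, P (x i) = Real.exp (-(n * r)) * ∏ i, Q (x i) := by
      intro x hx
      rw [hF, Finset.mem_filter] at hx
      have hxQ : empDist n x = Q := hx.2
      have hgroup : ∀ (g : X → ℝ), ∏ i, g (x i) =
          ∏ a, g a ^ (Finset.univ.filter (fun i => x i = a)).card := by
        intro g
        rw [← Finset.prod_fiberwise_of_maps_to (fun i _ => Finset.mem_univ (x i)) (fun i => g (x i))]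
        apply Finset.prod_congr rfl
        intro a _
        rw [Finset.prod_congr rfl (fun i hi => by
          rw [(Finset.mem_filter.mp hi).2]), Finset.prod_const]
      rw [hgroup P, hgroup Q]
      have hexp : Real.exp (-(n * r)) =
          ∏ a, Real.exp (-(n * (if Q a = 0 then 0 else Q a * Real.log (Q a / P a)))) := by
        rw [← Real.exp_sum]
        congr 1
        rw [hr, Finset.mul_sum, ← Finset.sum_neg_distrib]
      rw [hexp, ← Finset.prod_mul_distrib]
      apply Finset.prod_congr rfl
      intro a _
      set c := (Finset.univ.filter (fun i => x i = a)).card with hc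
      have hQa : Q a = c / n := (congrFun hxQ a).symm
      by_cases h0 : Q a = 0
      · have hc0 : c = 0 := by
          rw [h0] at hQa
          field_simp at hQa
          exact_mod_cast (by simpa using hQa.symm : (c:ℝ) = 0)
        rw [h0, hc0]
        simp
      · have hPa : 0 < P a := lt_of_le_of_ne (hP.1 a) (Ne.symm (hbad a h0))
        have hQa' : 0 < Q a := lt_of_le_of_ne (hQnn a) (Ne.symm h0)
        have hcn : (c : ℝ) = n * Q a := by rw [hQa]; field_simp
        rw [if_neg h0]
        have : -(n * (Q a * Real.log (Q a / P a))) = (c : ℝ) * Real.log (P a / Q a) := by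
          rw [Real.log_div (ne_of_gt hPa) (ne_of_gt hQa'), hcn,
            Real.log_div (ne_of_gt hQa') (ne_of_gt hPa)]
          ring
        rw [this, ← Real.log_pow, Real.exp_log (by positivity), div_pow]
        field_simp
    -- sum up
    calc ∑ x ∈ F, ENNReal.ofReal (∏ i, P (x i))
        = ∑ x ∈ F, ENNReal.ofReal (Real.exp (-(n * r))) * ENNReal.ofReal (∏ i, Q (x i)) := by
          apply Finset.sum_congr rfl
          intro x hx
          rw [hpt x hx, ENNReal.ofReal_mul (Real.exp_nonneg _)]
      _ = ENNReal.ofReal (Real.exp (-(n * r))) * ∑ x ∈ F, ENNReal.ofReal (∏ i, Q (x i)) := by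
          exact (Finset.mul_sum _ _ _).symm
      _ ≤ ENNReal.ofReal (Real.exp (-(n * r))) * ∑ x : Fin n → X, ENNReal.ofReal (∏ i, Q (x i)) := by
          gcongr
          exact Finset.filter_subset _ _
      _ ≤ ENNReal.ofReal (Real.exp (-(n * r))) * 1 := by
          gcongr
          rw [← ENNReal.ofReal_sum_of_nonneg (fun x _ => Finset.prod_nonneg (fun i _ => hQnn (x i)))]
          rw [← Fintype.sum_pow Q n]
          have hsum : ∑ a, Q a = 1 := by rw [← hQemp]; exact (empDist_isProbVec n hn x₀).2
          rw [hsum, one_pow, ENNReal.ofReal_one]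
      _ = ENNReal.ofReal (Real.exp (-(n * r))) := mul_one _

open Classical in
/-- Method-of-types bound: the probability that the pair of empirical distributions of two
independent i.i.d. sequences (from `P₁` and `P₂`) has score at most `λ` is at most
`(n+1)^{2|X|} · exp(−n·Ω(P₁,P₂,λ))`. -/
theorem prob_score_le_bound [Nonempty X] [DecidableEq X]
    (f : (X → ℝ) → (X → ℝ) → ℝ)
    (hf0 : ∀ P Q, IsProbVec P → IsProbVec Q → 0 ≤ f P Q)
    (hfc : ContinuousOn (fun pq : (X → ℝ) × (X → ℝ) => f pq.1 pq.2)
      {pq | IsProbVec pq.1 ∧ IsProbVec pq.2})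
    (P₁ P₂ : X → ℝ) (hP₁ : IsProbVec P₁) (hP₂ : IsProbVec P₂)
    (n : ℕ) (hn : 0 < n) (lam : ℝ) (hlam : 0 ≤ lam) :
    ENNReal.ofReal
        (∑ p : (Fin n → X) × (Fin n → X),
          if f (empDist n p.1) (empDist n p.2) ≤ lam then
            (∏ i, P₁ (p.1 i)) * (∏ i, P₂ (p.2 i)) else 0) ≤
      ((n + 1 : ENNReal)) ^ (2 * Fintype.card X) *
        EReal.exp (-(n : EReal) * Omega f P₁ P₂ lam) := by
  classical
  set T := Finset.univ.image (empDist (X := X) n) with hT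
  set g : (Fin n → X) × (Fin n → X) → (X → ℝ) × (X → ℝ) :=
    fun p => (empDist n p.1, empDist n p.2) with hg
  have hnonneg : ∀ p : (Fin n → X) × (Fin n → X),
      0 ≤ (if f (empDist n p.1) (empDist n p.2) ≤ lam then
        (∏ i, P₁ (p.1 i)) * (∏ i, P₂ (p.2 i)) else 0) := by
    intro p
    split_ifs
    · exact mul_nonneg (Finset.prod_nonneg fun i _ => hP₁.1 _)
        (Finset.prod_nonneg fun i _ => hP₂.1 _)
    · exact le_rfl
  rw [ENNReal.ofReal_sum_of_nonneg (fun p _ => hnonneg p)]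
  have hmaps : ∀ p : (Fin n → X) × (Fin n → X), p ∈ (Finset.univ : Finset _) → g p ∈ T ×ˢ T := by
    intro p _
    rw [Finset.mem_product]
    exact ⟨Finset.mem_image_of_mem _ (Finset.mem_univ _),
      Finset.mem_image_of_mem _ (Finset.mem_univ _)⟩
  rw [← Finset.sum_fiberwise_of_maps_to hmaps]
  have hbound : ∀ q ∈ T ×ˢ T,
      (∑ p ∈ Finset.univ.filter (fun p => g p = q),
        ENNReal.ofReal (if f (empDist n p.1) (empDist n p.2) ≤ lam then
          (∏ i, P₁ (p.1 i)) * (∏ i, P₂ (p.2 i)) else 0)) ≤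
        EReal.exp (-(n : EReal) * Omega f P₁ P₂ lam) := by
    intro q hq
    rw [Finset.mem_product] at hq
    obtain ⟨x₁, -, hq1⟩ := Finset.mem_image.mp hq.1
    obtain ⟨x₂, -, hq2⟩ := Finset.mem_image.mp hq.2
    have hpv1 : IsProbVec q.1 := hq1 ▸ empDist_isProbVec n hn x₁
    have hpv2 : IsProbVec q.2 := hq2 ▸ empDist_isProbVec n hn x₂
    by_cases hc : f q.1 q.2 ≤ lam
    · have hOm : Omega f P₁ P₂ lam ≤ KL q.1 P₁ + KL q.2 P₂ := by
        unfold Omega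
        exact iInf_le _ (⟨(q.1, q.2), hpv1, hpv2, hc⟩ :
          {t : (X → ℝ) × (X → ℝ) // IsProbVec t.1 ∧ IsProbVec t.2 ∧ f t.1 t.2 ≤ lam})
      have hexp : EReal.exp (-(n : EReal) * KL q.1 P₁) * EReal.exp (-(n : EReal) * KL q.2 P₂)
          ≤ EReal.exp (-(n : EReal) * Omega f P₁ P₂ lam) := by
        rw [← EReal.exp_add]
        apply EReal.exp_monotone
        have hco : (-(n : EReal)) = (-((n:ℝ) : EReal)) := by
          rw [EReal.coe_coe_eq_natCast]
        rw [hco]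
        exact key_ineq (n : ℝ) (by positivity) (KL_ne_bot _ _) (KL_ne_bot _ _) hOm
      refine le_trans ?_ hexp
      have hfib : Finset.univ.filter (fun p : (Fin n → X) × (Fin n → X) => g p = q) =
          (Finset.univ.filter (fun x : Fin n → X => empDist n x = q.1)) ×ˢ
          (Finset.univ.filter (fun y : Fin n → X => empDist n y = q.2)) := by
        ext p
        simp only [Finset.mem_filter, Finset.mem_product, Finset.mem_univ, true_and, hg,
          Prod.ext_iff]
      rw [hfib, Finset.sum_product]
      have : ∀ x ∈ Finset.univ.filter (fun x : Fin n → X => empDist n x = q.1),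
          ∀ y ∈ Finset.univ.filter (fun y : Fin n → X => empDist n y = q.2),
          ENNReal.ofReal (if f (empDist n x) (empDist n y) ≤ lam then
            (∏ i, P₁ (x i)) * (∏ i, P₂ (y i)) else 0) =
          ENNReal.ofReal (∏ i, P₁ (x i)) * ENNReal.ofReal (∏ i, P₂ (y i)) := by
        intro x hx y hy
        rw [Finset.mem_filter] at hx hy
        rw [hx.2, hy.2, if_pos hc,
          ENNReal.ofReal_mul (Finset.prod_nonneg fun i _ => hP₁.1 _)]
      calc ∑ x ∈ Finset.univ.filter (fun x : Fin n → X => empDist n x = q.1),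
            ∑ y ∈ Finset.univ.filter (fun y : Fin n → X => empDist n y = q.2),
            ENNReal.ofReal (if f (empDist n x) (empDist n y) ≤ lam then
              (∏ i, P₁ (x i)) * (∏ i, P₂ (y i)) else 0)
          = (∑ x ∈ Finset.univ.filter (fun x : Fin n → X => empDist n x = q.1),
              ENNReal.ofReal (∏ i, P₁ (x i))) *
            (∑ y ∈ Finset.univ.filter (fun y : Fin n → X => empDist n y = q.2),
              ENNReal.ofReal (∏ i, P₂ (y i))) := by
            rw [Finset.sum_mul_sum]
            exact Finset.sum_congr rfl fun x hx => Finset.sum_congr rfl fun y hy => this x hx y hy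
        _ ≤ _ := mul_le_mul' (fiber_bound P₁ hP₁ n hn q.1) (fiber_bound P₂ hP₂ n hn q.2)
    · have : ∀ p ∈ Finset.univ.filter (fun p : (Fin n → X) × (Fin n → X) => g p = q),
          ENNReal.ofReal (if f (empDist n p.1) (empDist n p.2) ≤ lam then
            (∏ i, P₁ (p.1 i)) * (∏ i, P₂ (p.2 i)) else 0) = 0 := by
        intro p hp
        rw [Finset.mem_filter] at hp
        have h1 : empDist n p.1 = q.1 := congrArg Prod.fst hp.2
        have h2 : empDist n p.2 = q.2 := congrArg Prod.snd hp.2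
        rw [h1, h2, if_neg hc]
        simp
      rw [Finset.sum_congr rfl this]
      simp
  calc ∑ q ∈ T ×ˢ T, ∑ p ∈ Finset.univ.filter (fun p => g p = q),
        ENNReal.ofReal (if f (empDist n p.1) (empDist n p.2) ≤ lam then
          (∏ i, P₁ (p.1 i)) * (∏ i, P₂ (p.2 i)) else 0)
      ≤ ∑ _q ∈ T ×ˢ T, EReal.exp (-(n : EReal) * Omega f P₁ P₂ lam) :=
        Finset.sum_le_sum hbound
    _ = ((T ×ˢ T).card : ENNReal) * EReal.exp (-(n : EReal) * Omega f P₁ P₂ lam) := by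
        rw [Finset.sum_const, nsmul_eq_mul]
    _ ≤ ((n + 1 : ENNReal)) ^ (2 * Fintype.card X) *
        EReal.exp (-(n : EReal) * Omega f P₁ P₂ lam) := by
        gcongr
        have hcard : (T ×ˢ T).card ≤ (n+1) ^ (2 * Fintype.card X) := by
          rw [Finset.card_product, two_mul, pow_add]
          exact Nat.mul_le_mul (card_types_le n hn) (card_types_le n hn)
        calc ((T ×ˢ T).card : ENNReal) ≤ (((n+1) ^ (2 * Fintype.card X) : ℕ) : ENNReal) := by
              exact_mod_cast hcard
          _ = ((n + 1 : ENNReal)) ^ (2 * Fintype.card X) := by push_cast; ring
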